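/- For a network of N identical phase oscillators with global (equal, all-to-all) coupling, every solution is frequency synchronized: for any solution θ : ℝ → ℝ^N of the system θ̇_i(t) = ω + K·Σ_{j=1}^N g(θ_i(t) − θ_j(t)) (i = 1,…,N) and any pair of indices i, j, the limit Ω_{ij} := lim_{T→∞} (θ_i(T) − θ_j(T))/T exists and equals 0. -/

import Mathlib

open Set Filter
open scoped NNReal

/-- A `C¹` periodic function on `ℝ` is Lipschitz. -/
lemma lipschitz_of_contDiff_periodic (g : ℝ → ℝ) (hg : ContDiff ℝ 1 g)
    (hper : Function.Periodic g (2 * Real.pi)) : ∃ L : ℝ≥0, LipschitzWith L g := by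
  have hder_per : Function.Periodic (deriv g) (2 * Real.pi) := by
    intro x
    have h1 : deriv (fun y => g (y + 2 * Real.pi)) x = deriv g (x + 2 * Real.pi) :=
      deriv_comp_add_const g (2 * Real.pi) x
    rw [← h1, hper.funext]
  obtain ⟨C, hC⟩ := (isCompact_Icc (a := (0:ℝ)) (b := 2 * Real.pi)).exists_bound_of_continuousOn
    (hg.continuous_deriv le_rfl).continuousOn
  refine ⟨C.toNNReal, lipschitzWith_of_nnnorm_deriv_le (hg.differentiable one_ne_zero) ?_⟩
  intro x
  have h2pi : (0:ℝ) < 2 * Real.pi := by positivity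
  set n : ℤ := ⌊x / (2 * Real.pi)⌋
  have hx : deriv g x = deriv g (x - n * (2 * Real.pi)) := (hder_per.sub_int_mul_eq n).symm
  have hmem : x - n * (2 * Real.pi) ∈ Icc (0:ℝ) (2 * Real.pi) :=
    ⟨Int.sub_floor_div_mul_nonneg x h2pi, le_of_lt (Int.sub_floor_div_mul_lt x h2pi)⟩
  have := hC _ hmem
  rw [← NNReal.coe_le_coe, Real.coe_toNNReal', coe_nnnorm, hx]
  exact le_max_of_le_left this

theorem global_coupling_frequency_synchronized
    (N : ℕ) (hN : 1 ≤ N) (ω K : ℝ) (g : ℝ → ℝ)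
    (hg : ContDiff ℝ 1 g) (hper : Function.Periodic g (2 * Real.pi))
    (θ : ℝ → Fin N → ℝ)
    (hθ : ∀ t : ℝ, ∀ i : Fin N,
      HasDerivAt (fun s => θ s i) (ω + K * ∑ j : Fin N, g (θ t i - θ t j)) t)
    (i j : Fin N) :
    Filter.Tendsto (fun T : ℝ => (θ T i - θ T j) / T) Filter.atTop (nhds 0) := by
  obtain ⟨L, hL⟩ := lipschitz_of_contDiff_periodic g hg hper
  set u : ℝ → ℝ := fun t => θ t i - θ t j with hu_def
  set v : ℝ → ℝ → ℝ := fun t x =>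
    K * ∑ k : Fin N, (g (x + (θ t j - θ t k)) - g (θ t j - θ t k)) with hv_def
  -- u is a solution of u' = v t u
  have hu' : ∀ t, HasDerivAt u (v t (u t)) t := by
    intro t
    have h : HasDerivAt (fun s => θ s i - θ s j) ((ω + K * ∑ k : Fin N, g (θ t i - θ t k)) -
        (ω + K * ∑ k : Fin N, g (θ t j - θ t k))) t := (hθ t i).sub (hθ t j)
    convert h using 1
    show K * ∑ k : Fin N, (g ((θ t i - θ t j) + (θ t j - θ t k)) - g (θ t j - θ t k)) =
      (ω + K * ∑ k : Fin N, g (θ t i - θ t k)) - (ω + K * ∑ k : Fin N, g (θ t j - θ t k))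
    rw [Finset.sum_sub_distrib, mul_sub]
    have : ∀ k : Fin N, (θ t i - θ t j) + (θ t j - θ t k) = θ t i - θ t k := by
      intro k; ring
    simp only [this]
    ring
  -- v t is Lipschitz in x, uniformly in t
  have hlipv : ∀ t, LipschitzOnWith (‖K‖₊ * (N * L)) (v t) univ := by
    intro t
    apply LipschitzWith.lipschitzOnWith
    apply LipschitzWith.of_dist_le_mul
    intro x y
    simp only [hv_def, Real.dist_eq]
    have h1 : K * ∑ k : Fin N, (g (x + (θ t j - θ t k)) - g (θ t j - θ t k)) -
        K * ∑ k : Fin N, (g (y + (θ t j - θ t k)) - g (θ t j - θ t k)) =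
        K * ∑ k : Fin N, (g (x + (θ t j - θ t k)) - g (y + (θ t j - θ t k))) := by
      rw [← mul_sub, ← Finset.sum_sub_distrib]
      congr 1
      refine Finset.sum_congr rfl fun k _ => by ring
    rw [h1, abs_mul]
    have h2 : |∑ k : Fin N, (g (x + (θ t j - θ t k)) - g (y + (θ t j - θ t k)))| ≤
        ∑ k : Fin N, (L : ℝ) * |x - y| := by
      refine (Finset.abs_sum_le_sum_abs _ _).trans (Finset.sum_le_sum fun k _ => ?_)
      have := hL.dist_le_mul (x + (θ t j - θ t k)) (y + (θ t j - θ t k))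
      simpa [Real.dist_eq, add_sub_add_right_eq_sub] using this
    rw [Finset.sum_const, Finset.card_univ, Fintype.card_fin, nsmul_eq_mul] at h2
    calc |K| * |∑ k : Fin N, (g (x + (θ t j - θ t k)) - g (y + (θ t j - θ t k)))|
        ≤ |K| * ((N : ℝ) * ((L : ℝ) * |x - y|)) := by
          exact mul_le_mul_of_nonneg_left h2 (abs_nonneg K)
      _ = ((‖K‖₊ * (N * L) : ℝ≥0) : ℝ) * |x - y| := by
          push_cast [Real.norm_eq_abs]
          ring
  -- constant functions at multiples of 2π are solutions
  have hvzero : ∀ (n : ℤ) (t : ℝ), v t (2 * Real.pi * n) = 0 := by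
    intro n t
    simp only [hv_def]
    have : ∀ k : Fin N, g (2 * Real.pi * n + (θ t j - θ t k)) = g (θ t j - θ t k) := by
      intro k
      have h := hper.sub_int_mul_eq (x := 2 * Real.pi * n + (θ t j - θ t k)) n
      rw [show 2 * Real.pi * (n:ℝ) + (θ t j - θ t k) - n * (2 * Real.pi)
        = θ t j - θ t k by ring] at h
      exact h.symm
    simp [this]
  -- key: if u hits a multiple of 2π at some time, it is constant
  have hconst : ∀ (n : ℤ) (s t : ℝ), u s = 2 * Real.pi * n → u t = 2 * Real.pi * n := by
    intro n s t hs
    set a : ℝ := min s t - 1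
    set b : ℝ := max s t + 1
    have hsab : s ∈ Ioo a b := ⟨by simp only [a]; linarith [min_le_left s t],
      by simp only [b]; linarith [le_max_left s t]⟩
    have htab : t ∈ Icc a b := ⟨by simp only [a]; linarith [min_le_right s t],
      by simp only [b]; linarith [le_max_right s t]⟩
    have := ODE_solution_unique_of_mem_Icc (v := v) (s := fun _ => univ)
      (fun t' _ => hlipv t') hsab
      (fun t' _ => (hu' t').continuousAt.continuousWithinAt)
      (fun t' _ => hu' t') (fun _ _ => mem_univ _)
      (continuousOn_const (c := 2 * Real.pi * n))
      (fun t' _ => by simpa [hvzero n t'] using (hasDerivAt_const t' (2 * Real.pi * n)))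
      (fun _ _ => mem_univ _) hs
    exact this htab
  -- u is trapped in [2πm, 2π(m+1)]
  set m : ℤ := ⌊u 0 / (2 * Real.pi)⌋ with hm_def
  have h2pi : (0:ℝ) < 2 * Real.pi := by positivity
  have hlow0 : 2 * Real.pi * m ≤ u 0 := by
    have := Int.sub_floor_div_mul_nonneg (u 0) h2pi
    rw [← hm_def] at this; linarith [this]
  have hhigh0 : u 0 < 2 * Real.pi * (m + 1) := by
    have := Int.sub_floor_div_mul_lt (u 0) h2pi
    rw [← hm_def] at this; push_cast; linarith [this]
  have hcont : Continuous u := by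
    rw [continuous_iff_continuousAt]; exact fun t => (hu' t).continuousAt
  have htrap : ∀ t, u t ∈ Icc (2 * Real.pi * m) (2 * Real.pi * (m + 1)) := by
    intro t
    constructor
    · by_contra h
      push_neg at h
      have hmem : (2 * Real.pi * m) ∈ uIcc (u t) (u 0) := by
        rw [mem_uIcc]; left; exact ⟨le_of_lt h, hlow0⟩
      obtain ⟨s, _, hs⟩ := intermediate_value_uIcc (f := u) (a := t) (b := 0)
        hcont.continuousOn hmem
      have := hconst m s t hs
      linarith
    · by_contra h
      push_neg at h
      have hmem : (2 * Real.pi * (m + 1)) ∈ uIcc (u 0) (u t) := by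
        rw [mem_uIcc]; left; exact ⟨le_of_lt hhigh0, le_of_lt h⟩
      obtain ⟨s, _, hs⟩ := intermediate_value_uIcc (f := u) (a := 0) (b := t)
        hcont.continuousOn (by push_cast at hmem ⊢; exact hmem)
      have := hconst (m + 1) s 0 (by push_cast at hs ⊢; linarith [hs])
      push_cast at this
      linarith
  -- conclude
  set C : ℝ := |2 * Real.pi * m| + |2 * Real.pi * (m + 1)|
  have hbound : ∀ t, |u t| ≤ C := by
    intro t
    obtain ⟨h1, h2⟩ := htrap t
    rw [abs_le]
    constructor
    · calc -C ≤ -(|2 * Real.pi * m|) :=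
          neg_le_neg (le_add_of_nonneg_right (abs_nonneg _))
        _ ≤ 2 * Real.pi * m := neg_abs_le _
        _ ≤ u t := h1
    · calc u t ≤ 2 * Real.pi * (m + 1) := h2
        _ ≤ |2 * Real.pi * (m + 1)| := le_abs_self _
        _ ≤ C := le_add_of_nonneg_left (abs_nonneg _)
  have hCdiv : Tendsto (fun T : ℝ => C / T) atTop (nhds 0) :=
    tendsto_const_nhds.div_atTop tendsto_id
  apply squeeze_zero_norm' _ hCdiv
  filter_upwards [eventually_gt_atTop (0:ℝ)] with T hT
  rw [Real.norm_eq_abs, abs_div, abs_of_pos hT]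
  have := hbound T
  gcongr
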